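/- Let D be a finite digraph of order n with maximum out-degree Δ⁺(D) = Δ⁺ and minimum in-degree δ⁻(D) ≥ 1, and suppose (Δ⁺ + 1) · γ×₂(D) = 2n. Then for every minimum double dominating set S of D: every vertex of S has exactly one in-neighbor in S, every vertex of S has out-degree exactly Δ⁺ in D, and every vertex of V(D) ∖ S has exactly two in-neighbors in S. -/
import Mathlib


open Finset

variable {V : Type*}

/-- The out-degree of `v` in the digraph with arc relation `A`. -/
def outDeg [Fintype V] (A : V → V → Prop) [DecidableRel A] (v : V) : ℕ :=
  (Finset.univ.filter fun u => A v u).card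

/-- The in-degree of `v` in the digraph with arc relation `A`. -/
def inDeg [Fintype V] (A : V → V → Prop) [DecidableRel A] (v : V) : ℕ :=
  (Finset.univ.filter fun u => A u v).card

/-- The minimum in-degree `δ⁻` of the digraph. -/
noncomputable def minInDeg [Fintype V] (A : V → V → Prop) [DecidableRel A] : ℕ :=
  sInf (Set.range fun v => inDeg A v)

/-- The maximum out-degree `Δ⁺` of the digraph. -/
noncomputable def maxOutDeg [Fintype V] (A : V → V → Prop) [DecidableRel A] : ℕ :=
  sSup (Set.range fun v => outDeg A v)

/-- The converse digraph `D⁻¹`, obtained by reversing every arc. -/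
def converse (A : V → V → Prop) : V → V → Prop := fun u v => A v u

instance converseDecidable (A : V → V → Prop) [h : DecidableRel A] :
    DecidableRel (converse A) := fun u v => h v u

/-- `B` is a `k`-limited packing: `|N⁺[v] ∩ B| ≤ k` for every vertex `v`. -/
def IsLimitedPacking [DecidableEq V] (A : V → V → Prop) [DecidableRel A] (k : ℕ)
    (B : Finset V) : Prop :=
  ∀ v : V, (B.filter fun u => u = v ∨ A v u).card ≤ k

/-- The `k`-limited packing number `L_k(D)` (`k = 1` gives the packing number `ρ(D)`). -/
noncomputable def limitedPackingNumber [Fintype V] [DecidableEq V] (A : V → V → Prop) [DecidableRel A]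
    (k : ℕ) : ℕ :=
  sSup {m | ∃ B : Finset V, IsLimitedPacking A k B ∧ B.card = m}

/-- `S` is an `r`-tuple dominating set: every vertex is dominated by at least `r`
vertices of `S` (where `u` dominates `v` if `u = v` or `(u,v)` is an arc). -/
def IsTupleDominating [DecidableEq V] (A : V → V → Prop) [DecidableRel A] (r : ℕ)
    (S : Finset V) : Prop :=
  ∀ v : V, r ≤ (S.filter fun u => u = v ∨ A u v).card

/-- The `r`-tuple domination number `γ×r(D)` (`r = 1` gives the domination number `γ(D)`,
`r = 2` the double domination number `γ×₂(D)`). -/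
noncomputable def tupleDominationNumber [Fintype V] [DecidableEq V] (A : V → V → Prop) [DecidableRel A]
    (r : ℕ) : ℕ :=
  sInf {m | ∃ S : Finset V, IsTupleDominating A r S ∧ S.card = m}

/-- `S` is a total 2-dominating set: the subdigraph induced by `S` has no isolated
vertices, and every vertex outside `S` has at least two in-neighbors in `S`. -/
def IsTotal2Dominating [DecidableEq V] (A : V → V → Prop) [DecidableRel A]
    (S : Finset V) : Prop :=
  (∀ v ∈ S, ∃ u ∈ S, u ≠ v ∧ (A u v ∨ A v u)) ∧
    ∀ v : V, v ∉ S → 2 ≤ (S.filter fun u => A u v).card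

/-- The total 2-domination number `γ×₂ᵗ(D)`. -/
noncomputable def total2DominationNumber [Fintype V] [DecidableEq V] (A : V → V → Prop)
    [DecidableRel A] : ℕ :=
  sInf {m | ∃ S : Finset V, IsTotal2Dominating A S ∧ S.card = m}

/-- `B` is a total 2-limited packing: every vertex of `B` is adjacent with at most one
vertex of `B`, and every vertex outside `B` has at most two out-neighbors in `B`. -/
def IsTotal2LimitedPacking [DecidableEq V] (A : V → V → Prop) [DecidableRel A]
    (B : Finset V) : Prop :=
  (∀ v ∈ B, (B.filter fun u => u ≠ v ∧ (A u v ∨ A v u)).card ≤ 1) ∧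
    ∀ v : V, v ∉ B → (B.filter fun u => A v u).card ≤ 2

/-- The total 2-limited packing number `L₂ᵗ(D)`. -/
noncomputable def total2LimitedPackingNumber [Fintype V] [DecidableEq V] (A : V → V → Prop)
    [DecidableRel A] : ℕ :=
  sSup {m | ∃ B : Finset V, IsTotal2LimitedPacking A B ∧ B.card = m}

/-- An end-vertex: a vertex `v` with `deg⁺(v) + deg⁻(v) = 1`. -/
def IsEndVertex [Fintype V] (A : V → V → Prop) [DecidableRel A] (v : V) : Prop :=
  outDeg A v + inDeg A v = 1

/-- A penultimate vertex: a vertex adjacent with an end-vertex. -/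
def IsPenultimate [Fintype V] (A : V → V → Prop) [DecidableRel A] (v : V) : Prop :=
  ∃ u : V, IsEndVertex A u ∧ (A u v ∨ A v u)
/-- If `δ⁻(D) ≥ 1` and `(Δ⁺ + 1) · γ×₂(D) = 2n`, then every minimum double
dominating set `S` satisfies: each `v ∈ S` has exactly one in-neighbor in `S` and
out-degree exactly `Δ⁺`, and each `v ∉ S` has exactly two in-neighbors in `S`. -/
theorem stmt6 {V : Type*} [Fintype V] [DecidableEq V] (A : V → V → Prop) [DecidableRel A]
    (hloopless : ∀ v : V, ¬ A v v) (n : ℕ) (hn : Fintype.card V = n)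
    (hδ : 1 ≤ minInDeg A)
    (heq : (maxOutDeg A + 1) * tupleDominationNumber A 2 = 2 * n) :
    ∀ S : Finset V, IsTupleDominating A 2 S → S.card = tupleDominationNumber A 2 →
      (∀ v ∈ S, (S.filter fun u => A u v).card = 1 ∧ outDeg A v = maxOutDeg A) ∧
      (∀ v ∉ S, (S.filter fun u => A u v).card = 2) := by
  intro S hS hScard
  -- double counting
  have hΔle : ∀ u : V, outDeg A u ≤ maxOutDeg A := fun u =>
    le_csSup (Set.Finite.bddAbove (Set.finite_range _)) ⟨u, rfl⟩
  have hTsplit : ∀ v : V, (S.filter fun u => u = v ∨ A u v)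
      = (S.filter fun u => u = v) ∪ (S.filter fun u => A u v) := fun v =>
    Finset.filter_or ..
  have hTdisj : ∀ v : V, Disjoint (S.filter fun u => u = v) (S.filter fun u => A u v) := by
    intro v
    rw [Finset.disjoint_left]
    intro u h1 h2
    simp only [Finset.mem_filter] at h1 h2
    exact hloopless v (h1.2 ▸ h2.2)
  have hswap : ∑ v : V, (S.filter fun u => u = v ∨ A u v).card
      = ∑ u ∈ S, (1 + outDeg A u) := by
    simp only [Finset.card_filter]
    rw [Finset.sum_comm]
    refine Finset.sum_congr rfl fun u hu => ?_
    rw [← Finset.card_filter]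
    have : (Finset.univ.filter fun v => u = v ∨ A u v)
        = (Finset.univ.filter fun v => u = v) ∪ (Finset.univ.filter fun v => A u v) :=
      Finset.filter_or ..
    have hd : Disjoint (Finset.univ.filter fun v => u = v) (Finset.univ.filter fun v => A u v) := by
      rw [Finset.disjoint_left]
      intro v h1 h2
      simp only [Finset.mem_filter] at h1 h2
      exact hloopless u (h1.2 ▸ h2.2)
    rw [this, Finset.card_union_of_disjoint hd, Finset.filter_eq]
    simp [outDeg]
  have h2n : 2 * n = ∑ _v : V, 2 := by
    rw [Finset.sum_const, Finset.card_univ, hn, smul_eq_mul, mul_comm]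
  have hle1 : ∀ v : V, 2 ≤ (S.filter fun u => u = v ∨ A u v).card := hS
  have hle2 : ∀ u ∈ S, 1 + outDeg A u ≤ maxOutDeg A + 1 := by
    intro u _
    have := hΔle u
    omega
  have hsum_le : ∑ u ∈ S, (1 + outDeg A u) ≤ (maxOutDeg A + 1) * S.card := by
    calc ∑ u ∈ S, (1 + outDeg A u) ≤ ∑ _u ∈ S, (maxOutDeg A + 1) :=
          Finset.sum_le_sum (fun u _ => by have := hΔle u; omega)
      _ = (maxOutDeg A + 1) * S.card := by rw [Finset.sum_const, smul_eq_mul, mul_comm]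
  have key : ∑ _v : V, 2 = ∑ v : V, (S.filter fun u => u = v ∨ A u v).card := by
    have h1 : ∑ _v : V, 2 ≤ ∑ v : V, (S.filter fun u => u = v ∨ A u v).card :=
      Finset.sum_le_sum fun v _ => hle1 v
    have h2 : ∑ v : V, (S.filter fun u => u = v ∨ A u v).card ≤ 2 * n := by
      rw [hswap, ← heq, ← hScard]; exact hsum_le
    rw [h2n] at *; omega
  have hsum2 : ∑ u ∈ S, (1 + outDeg A u) = (maxOutDeg A + 1) * S.card := by
    have := key; rw [hswap] at this
    rw [hScard, heq, h2n] at *; omega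
  have hcard2 : ∀ v : V, (S.filter fun u => u = v ∨ A u v).card = 2 := by
    have := (Finset.sum_eq_sum_iff_of_le (fun v (_ : v ∈ Finset.univ) => hle1 v)).mp key
    exact fun v => (this v (Finset.mem_univ v)).symm
  have hdeg : ∀ u ∈ S, 1 + outDeg A u = maxOutDeg A + 1 := by
    have h := (Finset.sum_eq_sum_iff_of_le
      (fun u (hu : u ∈ S) => by have := hΔle u; omega : ∀ u ∈ S, 1 + outDeg A u ≤ maxOutDeg A + 1)).mp ?_
    · exact fun u hu => h u hu
    · rw [hsum2, Finset.sum_const, smul_eq_mul, mul_comm]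
  constructor
  · intro v hv
    refine ⟨?_, by have := hdeg v hv; omega⟩
    have h := hcard2 v
    rw [hTsplit v, Finset.card_union_of_disjoint (hTdisj v), Finset.filter_eq'] at h
    simp [hv] at h
    omega
  · intro v hv
    have h := hcard2 v
    rw [hTsplit v, Finset.card_union_of_disjoint (hTdisj v), Finset.filter_eq'] at h
    simp [hv] at h
    omega
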